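/- Let M be a non-trivial complete lattice, 𝒜 = (X, S, R) an automaton with R ⊆ X × S × S and fibers R_x, and B a bounded subposet of M^S with {0,1}^S ⊆ B. Define for each x ∈ X the functors T_{R_x}(b)(s) = ⋀{ b(t) : s R_x t } and P_{R_x}(b)(t) = ⋁{ b(s) : s R_x t } on B. Then for every x ∈ X, R_x = R_{T_{R_x}} = R^{P_{R_x}}; that is, the automaton 𝒜 is recoverable from both labelled transition functors. -/
import Mathlib

/-- For an automaton (X,S,R) and B a bounded subposet of M^S with
{0,1}^S ⊆ B, for every x ∈ X the fiber R_x equals both induced relations: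
R_x = R_{T_{R_x}} = R^{P_{R_x}}. -/
theorem stmt13 {M S X : Type*} [CompleteLattice M] (hM : (⊥ : M) ≠ ⊤)
    [Nonempty S] [Nonempty X]
    (R : X → S → S → Prop) (B : Set (S → M))
    (hB0 : (fun _ => (⊥ : M)) ∈ B) (hB1 : (fun _ => (⊤ : M)) ∈ B)
    (hfull : ∀ f : S → M, (∀ s, f s = ⊥ ∨ f s = ⊤) → f ∈ B) :
    ∀ x : X,
      (∀ s t : S, R x s t ↔ (∀ b ∈ B, (⨅ u ∈ {u' | R x s u'}, b u) ≤ b t)) ∧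
      (∀ s t : S, R x s t ↔ (∀ b ∈ B, b s ≤ (⨆ u ∈ {u' | R x u' t}, b u))) := by
  classical
  intro x
  constructor
  · intro s t
    constructor
    · intro h b _
      exact biInf_le b h
    · intro h
      set f : S → M := fun u => if R x s u then ⊤ else ⊥ with hf
      have hfB : f ∈ B := hfull f (fun u => by by_cases hu : R x s u <;> simp [hf, hu])
      have := h f hfB
      have hinf : (⨅ u ∈ {u' | R x s u'}, f u) = ⊤ := by
        apply le_antisymm le_top
        refine le_iInf₂ fun u hu => ?_
        simp only [Set.mem_setOf_eq] at hu
        simp [hf, hu]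
      rw [hinf, top_le_iff, hf] at this
      by_contra hR
      simp [hR] at this
      exact hM this
  · intro s t
    constructor
    · intro h b _
      exact le_biSup b h
    · intro h
      set f : S → M := fun u => if R x u t then ⊥ else ⊤ with hf
      have hfB : f ∈ B := hfull f (fun u => by by_cases hu : R x u t <;> simp [hf, hu])
      have := h f hfB
      have hsup : (⨆ u ∈ {u' | R x u' t}, f u) = ⊥ := by
        apply le_antisymm _ bot_le
        refine iSup₂_le fun u hu => ?_
        simp [Set.mem_setOf_eq] at hu
        simp [hf, hu]
      rw [hsup, le_bot_iff, hf] at this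
      by_contra hR
      simp [hR] at this
      exact hM this.symm
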